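/- Let θ : ĝ → g be a central extension of restricted Lie algebras over F with kernel h (so [h,ĝ] = 0 and u^[2]_ĝ = 0 for all u ∈ h), let D_g be a restricted derivation of (g,[2]_g), let D_h : h → h be F-linear, and let s be a section of θ. Define ψ(x,y) = [s(x),s(y)] + s([x,y]), ς(x) = s(x)^[2]_ĝ + s(x^[2]_g), Ob_I(x,y) = D_h(ψ(x,y)) + ψ(D_g(x),y) + ψ(x,D_g(y)), and Ob_II(x) = D_h(ς(x)) + ψ(x,D_g(x)). Then the pair (D_h, D_g) is extensible — i.e. there exists a restricted derivation D_ĝ of (ĝ,[2]_ĝ) with D_ĝ(u) = D_h(u) for all u ∈ h and θ∘D_ĝ = D_g∘θ — if and only if the obstruction class is trivial, i.e. there exists an F-linear map γ : g → h with Ob_I(x,y) = γ([x,y]) and Ob_II(x) = γ(x^[2]_g) for all x,y ∈ g. -/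

import Mathlib

/-- for a central extension `θ : ĝ → g` of restricted Lie algebras with
kernel `h`, the pair `(D_h, D_g)` is extensible if and only if the obstruction class
is trivial. -/
theorem stmt17
    {F : Type*} [Field F] [CharP F 2]
    {g : Type*} [LieRing g] [LieAlgebra F g]
    {gh : Type*} [LieRing gh] [LieAlgebra F gh]
    -- restricted structure on g
    (sqg : g → g)
    (hsqg_ad : ∀ x y : g, ⁅sqg x, y⁆ = ⁅x, ⁅x, y⁆⁆)
    (hsqg_smul : ∀ (a : F) (x : g), sqg (a • x) = a ^ 2 • sqg x)
    (hsqg_add : ∀ x y : g, sqg (x + y) = sqg x + sqg y + ⁅x, y⁆)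
    -- restricted structure on ĝ
    (sqgh : gh → gh)
    (hsqgh_ad : ∀ u v : gh, ⁅sqgh u, v⁆ = ⁅u, ⁅u, v⁆⁆)
    (hsqgh_smul : ∀ (a : F) (u : gh), sqgh (a • u) = a ^ 2 • sqgh u)
    (hsqgh_add : ∀ u v : gh, sqgh (u + v) = sqgh u + sqgh v + ⁅u, v⁆)
    -- θ : ĝ → g is a central extension of restricted Lie algebras with kernel h
    (θ : gh →ₗ⁅F⁆ g)
    (hθsurj : Function.Surjective θ)
    (hθsq : ∀ u : gh, θ (sqgh u) = sqg (θ u))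
    (hcentral : ∀ u : gh, θ u = 0 → ∀ v : gh, ⁅u, v⁆ = 0)
    (hker_sq : ∀ u : gh, θ u = 0 → sqgh u = 0)
    -- a restricted derivation of g
    (Dg : g →ₗ[F] g)
    (hDg_br : ∀ x y : g, Dg ⁅x, y⁆ = ⁅Dg x, y⁆ + ⁅x, Dg y⁆)
    (hDg_sq : ∀ x : g, Dg (sqg x) = ⁅x, Dg x⁆)
    -- a linear map D_h : h → h on the kernel
    (Dh : gh →ₗ[F] gh)
    (hDh_ker : ∀ u : gh, θ u = 0 → θ (Dh u) = 0)
    -- a section of θ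
    (s : g →ₗ[F] gh)
    (hs : ∀ x : g, θ (s x) = x) :
    let ψ : g → g → gh := fun x y => ⁅s x, s y⁆ + s ⁅x, y⁆
    let ς : g → gh := fun x => sqgh (s x) + s (sqg x)
    let ObI : g → g → gh := fun x y => Dh (ψ x y) + ψ (Dg x) y + ψ x (Dg y)
    let ObII : g → gh := fun x => Dh (ς x) + ψ x (Dg x)
    -- (D_h, D_g) is extensible ...
    ((∃ Dgh : gh →ₗ[F] gh,
        (∀ u v : gh, Dgh ⁅u, v⁆ = ⁅Dgh u, v⁆ + ⁅u, Dgh v⁆) ∧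
        (∀ u : gh, Dgh (sqgh u) = ⁅u, Dgh u⁆) ∧
        (∀ u : gh, θ u = 0 → Dgh u = Dh u) ∧
        (∀ u : gh, θ (Dgh u) = Dg (θ u))) ↔
      -- ... iff the obstruction class is trivial:
      (∃ γ : g →ₗ[F] gh,
        (∀ x : g, θ (γ x) = 0) ∧
        (∀ x y : g, ObI x y = γ ⁅x, y⁆) ∧
        (∀ x : g, ObII x = γ (sqg x)))) := by
  intro ψ ς ObI ObII
  have h2F : (2:F) = 0 := by exact_mod_cast CharP.cast_eq_zero F 2
  have h2 : ∀ m : gh, m + m = 0 := fun m => by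
    calc m + m = (2:F) • m := (two_smul F m).symm
      _ = 0 := by rw [h2F, zero_smul]
  have h2g : ∀ m : g, m + m = 0 := fun m => by
    calc m + m = (2:F) • m := (two_smul F m).symm
      _ = 0 := by rw [h2F, zero_smul]
  have hz : ∀ m : gh, (2:ℤ) • m = 0 := fun m => by rw [two_zsmul]; exact h2 m
  have hzn : ∀ m : gh, (-2:ℤ) • m = 0 := fun m => by
    have h : (-2:ℤ) • m = -((2:ℤ) • m) := by rw [neg_smul]
    rw [h, hz, neg_zero]
  have flip : ∀ a b : gh, a + b = 0 → a = b := fun a b h => by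
    have h1 : a = -b := eq_neg_of_add_eq_zero_left h
    have h2' : -b = b := neg_eq_of_add_eq_zero_left (h2 b)
    rw [h1, h2']
  have hc : ∀ u v : gh, θ u = 0 → ⁅u, v⁆ = 0 := fun u v h => hcentral u h v
  have hc' : ∀ u v : gh, θ u = 0 → ⁅v, u⁆ = 0 := fun u v h => by
    rw [← neg_eq_zero, lie_skew]; exact hc u v h
  have hψ0 : ∀ x y : g, θ (ψ x y) = 0 := fun x y => by
    show θ (⁅s x, s y⁆ + s ⁅x, y⁆) = 0
    rw [map_add θ, LieHom.map_lie, hs, hs, hs]; exact h2g _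
  have hς0 : ∀ x : g, θ (ς x) = 0 := fun x => by
    show θ (sqgh (s x) + s (sqg x)) = 0
    rw [map_add θ, hθsq, hs, hs]; exact h2g _
  constructor
  · rintro ⟨Dgh, hbr, hsq, hker, hcomm⟩
    refine ⟨Dgh ∘ₗ s + s ∘ₗ Dg, fun x => ?_, fun x y => ?_, fun x => ?_⟩
    · simp only [LinearMap.add_apply, LinearMap.comp_apply]
      rw [map_add θ, hcomm, hs, hs]
      exact h2g _
    · -- ObI x y = γ ⁅x,y⁆
      have hγx : θ (Dgh (s x) + s (Dg x)) = 0 := by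
        rw [map_add θ, hcomm, hs, hs]; exact h2g _
      have hγy : θ (Dgh (s y) + s (Dg y)) = 0 := by
        rw [map_add θ, hcomm, hs, hs]; exact h2g _
      have e1 : ⁅Dgh (s x), s y⁆ = ⁅s (Dg x), s y⁆ := by
        have := hc _ (s y) hγx; rw [add_lie] at this; exact flip _ _ this
      have e2 : ⁅s x, Dgh (s y)⁆ = ⁅s x, s (Dg y)⁆ := by
        have := hc' _ (s x) hγy; rw [lie_add] at this; exact flip _ _ this
      show Dh (ψ x y) + ψ (Dg x) y + ψ x (Dg y) =
        (Dgh ∘ₗ s + s ∘ₗ Dg) ⁅x, y⁆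
      simp only [LinearMap.add_apply, LinearMap.comp_apply]
      rw [← hker _ (hψ0 x y)]
      show Dgh (⁅s x, s y⁆ + s ⁅x, y⁆) + (⁅s (Dg x), s y⁆ + s ⁅Dg x, y⁆) +
        (⁅s x, s (Dg y)⁆ + s ⁅x, Dg y⁆) = Dgh (s ⁅x, y⁆) + s (Dg ⁅x, y⁆)
      rw [map_add, hbr, e1, e2, hDg_br x y, map_add]
      abel_nf
      simp only [hz, hzn, zero_add, add_zero, neg_zero]
      try abel
    · -- ObII x = γ (sqg x)
      have hγx : θ (Dgh (s x) + s (Dg x)) = 0 := by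
        rw [map_add θ, hcomm, hs, hs]; exact h2g _
      have e2 : ⁅s x, Dgh (s x)⁆ = ⁅s x, s (Dg x)⁆ := by
        have := hc' _ (s x) hγx; rw [lie_add] at this; exact flip _ _ this
      show Dh (ς x) + ψ x (Dg x) = (Dgh ∘ₗ s + s ∘ₗ Dg) (sqg x)
      simp only [LinearMap.add_apply, LinearMap.comp_apply]
      rw [← hker _ (hς0 x)]
      show Dgh (sqgh (s x) + s (sqg x)) + (⁅s x, s (Dg x)⁆ + s ⁅x, Dg x⁆) =
        Dgh (s (sqg x)) + s (Dg (sqg x))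
      rw [map_add, hsq, e2, hDg_sq x]
      abel_nf
      simp only [hz, hzn, zero_add, add_zero, neg_zero]
      try abel
  · rintro ⟨γ, hγ0, hOI, hOII⟩
    refine ⟨s ∘ₗ Dg ∘ₗ θ.toLinearMap + γ ∘ₗ θ.toLinearMap
        + Dh ∘ₗ (LinearMap.id + s ∘ₗ θ.toLinearMap),
      fun u v => ?_, fun u => ?_, fun u h0 => ?_, fun u => ?_⟩
    · -- bracket
      set x := θ u with hx
      set y := θ v with hy
      set a := u + s x with haa
      set b := v + s y with hbb
      have ha : θ a = 0 := by rw [haa, map_add θ, hs, ← hx]; exact h2g _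
      have hb : θ b = 0 := by rw [hbb, map_add θ, hs, ← hy]; exact h2g _
      have hu : s x + a = u := by
        rw [haa]
        calc s x + (u + s x) = u + (s x + s x) := by abel
          _ = u := by rw [h2, add_zero]
      have hv : s y + b = v := by
        rw [hbb]
        calc s y + (v + s y) = v + (s y + s y) := by abel
          _ = v := by rw [h2, add_zero]
      have hbr_uv : ⁅u, v⁆ = ⁅s x, s y⁆ := by
        rw [← hu, ← hv, add_lie, hc a _ ha, add_zero, lie_add, hc' b _ hb, add_zero]
      have hθuv : θ ⁅u, v⁆ = ⁅x, y⁆ := by rw [LieHom.map_lie]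
      simp only [LinearMap.add_apply, LinearMap.comp_apply, LinearMap.id_apply,
        LieHom.coe_toLinearMap]
      rw [hθuv]
      have hDhker_a : θ (Dh a) = 0 := hDh_ker a ha
      have hγ0x : θ (γ x) = 0 := hγ0 x
      have hγ0y : θ (γ y) = 0 := hγ0 y
      rw [add_lie, add_lie, hc _ v (hγ0 x), hc _ v hDhker_a, add_zero, add_zero]
      rw [lie_add, lie_add, hc' _ u (hγ0 y), hc' _ u (hDh_ker b hb), add_zero, add_zero]
      have hrv : ⁅s (Dg x), v⁆ = ⁅s (Dg x), s y⁆ := by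
        rw [← hv, lie_add, hc' b _ hb, add_zero]
      have hlu : ⁅u, s (Dg y)⁆ = ⁅s x, s (Dg y)⁆ := by
        rw [← hu, add_lie, hc a _ ha, add_zero]
      rw [hrv, hlu]
      have hpsi : ⁅u, v⁆ + s ⁅x, y⁆ = ψ x y := by rw [hbr_uv]
      rw [hpsi]
      have hγbr : γ ⁅x, y⁆ = Dh (ψ x y) + ψ (Dg x) y + ψ x (Dg y) := (hOI x y).symm
      rw [hγbr, hDg_br x y, map_add]
      show s ⁅Dg x, y⁆ + s ⁅x, Dg y⁆ + (Dh (ψ x y) + ψ (Dg x) y + ψ x (Dg y))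
          + Dh (ψ x y) = ⁅s (Dg x), s y⁆ + ⁅s x, s (Dg y)⁆
      show s ⁅Dg x, y⁆ + s ⁅x, Dg y⁆ +
          (Dh (ψ x y) + (⁅s (Dg x), s y⁆ + s ⁅Dg x, y⁆) + (⁅s x, s (Dg y)⁆ + s ⁅x, Dg y⁆))
          + Dh (ψ x y) = ⁅s (Dg x), s y⁆ + ⁅s x, s (Dg y)⁆
      abel_nf
      simp only [hz, hzn, zero_add, add_zero, neg_zero]
      try abel
    · -- square
      set x := θ u with hx
      set a := u + s x with haa
      have ha : θ a = 0 := by rw [haa, map_add θ, hs, ← hx]; exact h2g _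
      have hu : s x + a = u := by
        rw [haa]
        calc s x + (u + s x) = u + (s x + s x) := by abel
          _ = u := by rw [h2, add_zero]
      have hsqu : sqgh u = sqgh (s x) := by
        rw [← hu, hsqgh_add, hker_sq a ha, add_zero, hc' a _ ha, add_zero]
      have hθsqu : θ (sqgh u) = sqg x := by rw [hθsq, ← hx]
      simp only [LinearMap.add_apply, LinearMap.comp_apply, LinearMap.id_apply,
        LieHom.coe_toLinearMap]
      rw [hθsqu]
      have hsig : sqgh u + s (sqg x) = ς x := by rw [hsqu]
      rw [hsig]
      have hγsq : γ (sqg x) = Dh (ς x) + ψ x (Dg x) := (hOII x).symm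
      rw [hγsq, hDg_sq x]
      rw [lie_add, lie_add]
      rw [hc' _ u (hγ0 x), hc' _ u (hDh_ker a ha), add_zero, add_zero]
      have hru : ⁅u, s (Dg x)⁆ = ⁅s x, s (Dg x)⁆ := by
        rw [← hu, add_lie, hc a _ ha, add_zero]
      rw [hru]
      show s ⁅x, Dg x⁆ + (Dh (ς x) + (⁅s x, s (Dg x)⁆ + s ⁅x, Dg x⁆)) + Dh (ς x)
          = ⁅s x, s (Dg x)⁆
      abel_nf
      simp only [hz, hzn, zero_add, add_zero, neg_zero]
      try abel
    · -- kernel restriction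
      simp only [LinearMap.add_apply, LinearMap.comp_apply, LinearMap.id_apply,
        LieHom.coe_toLinearMap, h0, map_zero, zero_add, add_zero]
    · -- compatibility with θ
      have ha : θ (u + s (θ u)) = 0 := by
        rw [map_add θ, hs]; exact h2g _
      simp only [LinearMap.add_apply, LinearMap.comp_apply, LinearMap.id_apply,
        LieHom.coe_toLinearMap]
      rw [map_add θ, map_add θ, hs, hγ0, hDh_ker _ ha, add_zero, add_zero]
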